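/- Let X_i, Y_i and Y be metric spaces with diam(X_i) → 0, and let f_i : Y_i → Y be ε_i-Hausdorff approximations with ε_i → 0. Let A_i be a nonempty set which is a subset of both X_i and Y_i (so Z_i := X_i ∪ Y_i with X_i ∩ Y_i = A_i), and suppose Z_i carries a metric d_i satisfying the natural gluing conditions: (a) d_i(x,y) ≤ d_{X_i}(x,y) for x, y ∈ X_i and d_i(y,y') ≤ d_{Y_i}(y,y') for y, y' ∈ Y_i; (b) for all y, y' ∈ Y_i, d_i(y,y') ≥ min( d_{Y_i}(y,y'), infDist_{Y_i}(y, A_i) + infDist_{Y_i}(y', A_i) ); (c) for all x ∈ X_i \ A_i and y ∈ Y_i, d_i(x,y) ≥ infDist_{Y_i}(y, A_i). Let A ⊆ Y be a nonempty closed subset with τ_i := (Hausdorff distance in Y between f_i(A_i) and A) → 0. Let Z = Y/A be the quotient metric space, whose points are the points of Y \ A together with one point ⋆ = π(A), with distance ρ(π(y), π(y')) = min( d_Y(y,y'), infDist(y,A) + infDist(y',A) ) and ρ(π(y), ⋆) = infDist(y, A), where π : Y → Y/A is the quotient map. Then the map F_i : Z_i → Z defined by F_i(z) = π(f_i(z))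 for z ∈ Y_i and F_i(z) = ⋆ for z ∈ X_i \ A_i is a (diam(X_i) + 2ε_i + 2τ_i)-Hausdorff approximation; in particular Z_i Gromov-Hausdorff converges to Y/A. -/

import Mathlib

/-- limits of gluings. Let `Z i = X i ∪ Y i` carry a glued metric `d i`
(the ambient `MetricSpace` structure) compatible with metrics `dX i` on `Xi i` and `dY i`
on `Yi i`, glued along `Ai i = Xi i ∩ Yi i`, where `diam(Xi i) → 0` (witnessed by bounds
`D i → 0`), `f i : (Yi i, dY i) → Y` are `ε i`-Hausdorff approximations with `ε i → 0`,
and `f i '' Ai i → A` in Hausdorff distance (`τ i → 0`) for a nonempty closed `A ⊆ Y`.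
Then the map `F i` (equal to `π ∘ f i` on `Yi i` and to the collapsed point `⋆ = π(A)`,
represented by `a₀ ∈ A`, on `Xi i \ Ai i`) is a `(D i + 2 ε i + 2 τ i)`-Hausdorff
approximation from `Z i` to the quotient `Y/A` (whose quotient metric is represented on
`Y` by the pseudometric `ρ`); in particular `Z i` Gromov–Hausdorff converges to `Y/A`. -/
theorem stmt_6
    (Z : ℕ → Type*) [∀ i, MetricSpace (Z i)]
    (Y : Type*) [MetricSpace Y]
    (Xi Yi Ai : ∀ i, Set (Z i))
    (hunion : ∀ i, Xi i ∪ Yi i = Set.univ)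
    (hinter : ∀ i, Xi i ∩ Yi i = Ai i)
    (hAine : ∀ i, (Ai i).Nonempty)
    -- metrics dX on the pieces Xi and dY on the pieces Yi
    (dX dY : ∀ i, Z i → Z i → ℝ)
    (hdX_nonneg : ∀ i, ∀ x ∈ Xi i, ∀ y ∈ Xi i, 0 ≤ dX i x y)
    (hdX_self : ∀ i, ∀ x ∈ Xi i, dX i x x = 0)
    (hdX_symm : ∀ i, ∀ x ∈ Xi i, ∀ y ∈ Xi i, dX i x y = dX i y x)
    (hdX_tri : ∀ i, ∀ x ∈ Xi i, ∀ y ∈ Xi i, ∀ z ∈ Xi i, dX i x z ≤ dX i x y + dX i y z)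
    (hdY_nonneg : ∀ i, ∀ x ∈ Yi i, ∀ y ∈ Yi i, 0 ≤ dY i x y)
    (hdY_self : ∀ i, ∀ x ∈ Yi i, dY i x x = 0)
    (hdY_symm : ∀ i, ∀ x ∈ Yi i, ∀ y ∈ Yi i, dY i x y = dY i y x)
    (hdY_tri : ∀ i, ∀ x ∈ Yi i, ∀ y ∈ Yi i, ∀ z ∈ Yi i, dY i x z ≤ dY i x y + dY i y z)
    -- (a) the glued metric is dominated by the piece metrics
    (ha_X : ∀ i, ∀ x ∈ Xi i, ∀ y ∈ Xi i, dist x y ≤ dX i x y)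
    (ha_Y : ∀ i, ∀ y ∈ Yi i, ∀ y' ∈ Yi i, dist y y' ≤ dY i y y')
    -- (b) lower bound for the glued metric on Yi
    (hb : ∀ i, ∀ y ∈ Yi i, ∀ y' ∈ Yi i,
      min (dY i y y') (sInf ((dY i y) '' Ai i) + sInf ((dY i y') '' Ai i)) ≤ dist y y')
    -- (c) lower bound for the glued metric between Xi \ Ai and Yi
    (hc : ∀ i, ∀ x ∈ Xi i \ Ai i, ∀ y ∈ Yi i, sInf ((dY i y) '' Ai i) ≤ dist x y)
    -- diam(Xi i) → 0
    (D : ℕ → ℝ) (hD : ∀ i, ∀ x ∈ Xi i, ∀ y ∈ Xi i, dX i x y ≤ D i)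
    (hDto : Filter.Tendsto D Filter.atTop (nhds 0))
    -- f i : (Yi i, dY i) → Y is an ε i-Hausdorff approximation, ε i → 0
    (ε : ℕ → ℝ) (hεto : Filter.Tendsto ε Filter.atTop (nhds 0))
    (f : ∀ i, Z i → Y)
    (hf1 : ∀ i, ∀ y ∈ Yi i, ∀ y' ∈ Yi i, |dist (f i y) (f i y') - dY i y y'| ≤ ε i)
    (hf2 : ∀ i, ∀ p : Y, ∃ y ∈ Yi i, dist p (f i y) ≤ ε i)
    -- A ⊆ Y nonempty closed, with Hausdorff distance (f i '' Ai i, A) ≤ τ i → 0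
    (A : Set Y) (hAne : A.Nonempty) (hAcl : IsClosed A)
    (τ : ℕ → ℝ) (hτ0 : ∀ i, 0 ≤ τ i) (hτto : Filter.Tendsto τ Filter.atTop (nhds 0))
    (hτ : ∀ i, EMetric.hausdorffEdist (f i '' Ai i) A ≤ ENNReal.ofReal (τ i))
    -- the quotient pseudometric ρ representing the metric of Y/A
    (ρ : Y → Y → ℝ)
    (hρ : ∀ y y' : Y, ρ y y' =
      min (dist y y') (Metric.infDist y A + Metric.infDist y' A))
    -- the point ⋆ = π(A) of the quotient, represented by a point a₀ of A
    (a₀ : Y) (ha₀ : a₀ ∈ A)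
    -- the maps F i
    (F : ∀ i, Z i → Y)
    (hF_Y : ∀ i, ∀ z ∈ Yi i, F i z = f i z)
    (hF_X : ∀ i, ∀ z ∈ Xi i \ Ai i, F i z = a₀) :
    -- conclusion: F i is a (D i + 2 ε i + 2 τ i)-Hausdorff approximation to (Y/A, ρ)
    ∀ i, (∀ z w : Z i, |ρ (F i z) (F i w) - dist z w| ≤ D i + 2 * ε i + 2 * τ i) ∧
      (∀ p : Y, ∃ z : Z i, ρ p (F i z) ≤ D i + 2 * ε i + 2 * τ i) := by
  intro i
  obtain ⟨b0, hb0⟩ := hAine i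
  have hAiX : Ai i ⊆ Xi i := by rw [← hinter i]; exact Set.inter_subset_left
  have hAiY : Ai i ⊆ Yi i := by rw [← hinter i]; exact Set.inter_subset_right
  have hDnn : 0 ≤ D i := by
    have h := hD i b0 (hAiX hb0) b0 (hAiX hb0)
    rwa [hdX_self i b0 (hAiX hb0)] at h
  have hEnn : 0 ≤ ε i := by
    have h := hf1 i b0 (hAiY hb0) b0 (hAiY hb0)
    rw [hdY_self i b0 (hAiY hb0), dist_self] at h
    simpa using h
  have hTnn := hτ0 i
  have hXcompl : ∀ z : Z i, z ∉ Yi i → z ∈ Xi i \ Ai i := by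
    intro z hz
    have hzu : z ∈ Xi i ∪ Yi i := by rw [hunion i]; trivial
    exact ⟨hzu.resolve_right hz, fun hza => hz (hAiY hza)⟩
  -- properties of S y = dY i y '' Ai i
  have hSne : ∀ y, ((dY i y) '' Ai i).Nonempty := fun y => ⟨_, ⟨b0, hb0, rfl⟩⟩
  have hSnonneg : ∀ y ∈ Yi i, ∀ r ∈ (dY i y) '' Ai i, (0:ℝ) ≤ r := by
    rintro y hy r ⟨a, ha, rfl⟩
    exact hdY_nonneg i y hy a (hAiY ha)
  have hSbdd : ∀ y ∈ Yi i, BddBelow ((dY i y) '' Ai i) := fun y hy =>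
    ⟨0, fun r hr => hSnonneg y hy r hr⟩
  have hφle : ∀ y ∈ Yi i, ∀ a ∈ Ai i, sInf ((dY i y) '' Ai i) ≤ dY i y a :=
    fun y hy a ha => csInf_le (hSbdd y hy) ⟨a, ha, rfl⟩
  -- points of f '' Ai are τ-close to A
  have hfA_T : ∀ a ∈ Ai i, Metric.infDist (f i a) A ≤ τ i := by
    intro a ha
    have h1 : EMetric.infEdist (f i a) A ≤ ENNReal.ofReal (τ i) :=
      le_trans (EMetric.infEdist_le_hausdorffEdist_of_mem (Set.mem_image_of_mem (f i) ha)) (hτ i)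
    rw [Metric.infDist]
    calc (EMetric.infEdist (f i a) A).toReal ≤ (ENNReal.ofReal (τ i)).toReal :=
          ENNReal.toReal_mono (by simp) h1
      _ = τ i := ENNReal.toReal_ofReal hTnn
  -- Claim 1
  have hC1 : ∀ y ∈ Yi i,
      Metric.infDist (f i y) A ≤ sInf ((dY i y) '' Ai i) + ε i + τ i := by
    intro y hy
    have key : Metric.infDist (f i y) A - (ε i + τ i) ≤ sInf ((dY i y) '' Ai i) := by
      apply le_csInf (hSne y)
      rintro r ⟨a, ha, rfl⟩
      have h1 : dist (f i y) (f i a) ≤ dY i y a + ε i := by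
        have h := abs_le.mp (hf1 i y hy a (hAiY ha))
        linarith [h.1, h.2]
      have h2 : Metric.infDist (f i y) A
          ≤ Metric.infDist (f i a) A + dist (f i y) (f i a) :=
        Metric.infDist_le_infDist_add_dist
      have h3 := hfA_T a ha
      linarith
    linarith
  -- Claim 2
  have hC2 : ∀ y ∈ Yi i,
      sInf ((dY i y) '' Ai i) ≤ Metric.infDist (f i y) A + ε i + τ i := by
    intro y hy
    apply le_of_forall_pos_le_add
    intro δ hδ
    obtain ⟨a', ha'A, ha'd⟩ := (Metric.infDist_lt_iff hAne).mp
      (lt_add_of_pos_right (Metric.infDist (f i y) A) (half_pos hδ))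
    have hH : EMetric.hausdorffEdist A (f i '' Ai i) < ENNReal.ofReal (τ i + δ/2) := by
      rw [EMetric.hausdorffEdist, Metric.hausdorffEDist_comm]
      calc EMetric.hausdorffEdist (f i '' Ai i) A ≤ ENNReal.ofReal (τ i) := hτ i
        _ < ENNReal.ofReal (τ i + δ/2) := by
            rw [ENNReal.ofReal_lt_ofReal_iff (by linarith)]; linarith
    obtain ⟨b, hb, hbd⟩ := EMetric.exists_edist_lt_of_hausdorffEdist_lt ha'A hH
    obtain ⟨a, ha, rfl⟩ := hb
    have hdb : dist a' (f i a) < τ i + δ/2 := by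
      rw [← edist_lt_ofReal]; exact hbd
    have h1 : dY i y a ≤ dist (f i y) (f i a) + ε i := by
      have h := abs_le.mp (hf1 i y hy a (hAiY ha))
      linarith [h.1, h.2]
    have h2 : dist (f i y) (f i a) ≤ dist (f i y) a' + dist a' (f i a) :=
      dist_triangle _ _ _
    have h3 := hφle y hy a ha
    linarith
  -- triangle bound through Ai
  have htri : ∀ z ∈ Yi i, ∀ w ∈ Yi i,
      dist z w ≤ sInf ((dY i z) '' Ai i) + sInf ((dY i w) '' Ai i) + D i := by
    intro z hz w hw
    apply le_of_forall_pos_le_add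
    intro δ hδ
    obtain ⟨r, ⟨a, ha, rfl⟩, hr⟩ := Real.lt_sInf_add_pos (hSne z) (half_pos hδ)
    obtain ⟨r', ⟨a', ha', rfl⟩, hr'⟩ := Real.lt_sInf_add_pos (hSne w) (half_pos hδ)
    have h1 : dist z w ≤ dist z a + dist a a' + dist a' w := dist_triangle4 _ _ _ _
    have h2 : dist z a ≤ dY i z a := ha_Y i z hz a (hAiY ha)
    have h3 : dist a a' ≤ D i :=
      le_trans (ha_X i a (hAiX ha) a' (hAiX ha')) (hD i a (hAiX ha) a' (hAiX ha'))
    have h4 : dist a' w ≤ dY i w a' := by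
      rw [dist_comm]; exact ha_Y i w hw a' (hAiY ha')
    linarith
  -- facts about ρ
  have hρsymm : ∀ p q : Y, ρ p q = ρ q p := by
    intro p q; rw [hρ, hρ, dist_comm, add_comm]
  have hρstar : ∀ p : Y, ρ p a₀ = Metric.infDist p A := by
    intro p
    rw [hρ, Metric.infDist_zero_of_mem ha₀, add_zero]
    exact min_eq_right (Metric.infDist_le_dist_of_mem ha₀)
  have hρnn : ∀ p q : Y, 0 ≤ ρ p q := by
    intro p q; rw [hρ]
    exact le_min dist_nonneg (add_nonneg Metric.infDist_nonneg Metric.infDist_nonneg)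
  set B := D i + 2 * ε i + 2 * τ i with hB
  -- the three cases
  have hYY : ∀ z ∈ Yi i, ∀ w ∈ Yi i, |ρ (f i z) (f i w) - dist z w| ≤ B := by
    intro z hz w hw
    have hu1 := hC1 z hz; have hu2 := hC2 z hz
    have hv1 := hC1 w hw; have hv2 := hC2 w hw
    have hdf : |dist (f i z) (f i w) - dY i z w| ≤ ε i := hf1 i z hz w hw
    have hdf' := abs_le.mp hdf
    have hbzw := hb i z hz w hw
    have htzw := htri z hz w hw
    have hdd : dist z w ≤ dY i z w := ha_Y i z hz w hw
    rw [hρ]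
    rw [abs_le]
    constructor
    · -- dist z w - ρ ≤ B
      rcases le_total (dist (f i z) (f i w))
          (Metric.infDist (f i z) A + Metric.infDist (f i w) A) with h | h
      · rw [min_eq_left h]; linarith
      · rw [min_eq_right h]; linarith
    · -- ρ - dist z w ≤ B
      have hm1 := min_le_left (dist (f i z) (f i w))
        (Metric.infDist (f i z) A + Metric.infDist (f i w) A)
      have hm2 := min_le_right (dist (f i z) (f i w))
        (Metric.infDist (f i z) A + Metric.infDist (f i w) A)
      rcases min_le_iff.mp hbzw with h | h
      · linarith
      · linarith
  have hYX : ∀ z ∈ Yi i, ∀ w ∈ Xi i \ Ai i, |ρ (f i z) a₀ - dist z w| ≤ B := by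
    intro z hz w hw
    rw [hρstar, abs_le]
    have hu1 := hC1 z hz; have hu2 := hC2 z hz
    have hlow : sInf ((dY i z) '' Ai i) ≤ dist z w := by
      rw [dist_comm]; exact hc i w hw z hz
    have hup : dist z w ≤ sInf ((dY i z) '' Ai i) + D i := by
      apply le_of_forall_pos_le_add
      intro δ hδ
      obtain ⟨r, ⟨a, ha, rfl⟩, hr⟩ := Real.lt_sInf_add_pos (hSne z) hδ
      have h1 : dist z w ≤ dist z a + dist a w := dist_triangle _ _ _
      have h2 : dist z a ≤ dY i z a := ha_Y i z hz a (hAiY ha)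
      have h3 : dist a w ≤ D i :=
        le_trans (ha_X i a (hAiX ha) w hw.1) (hD i a (hAiX ha) w hw.1)
      linarith
    constructor <;> linarith
  have hXX : ∀ z ∈ Xi i \ Ai i, ∀ w ∈ Xi i \ Ai i, |ρ a₀ a₀ - dist z w| ≤ B := by
    intro z hz w hw
    have hρ0 : ρ a₀ a₀ = 0 := by
      rw [hρ, dist_self, Metric.infDist_zero_of_mem ha₀]
      simp
    rw [hρ0, zero_sub, abs_neg, abs_of_nonneg dist_nonneg]
    have h3 : dist z w ≤ D i :=
      le_trans (ha_X i z hz.1 w hw.1) (hD i z hz.1 w hw.1)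
    linarith
  constructor
  · intro z w
    by_cases hz : z ∈ Yi i <;> by_cases hw : w ∈ Yi i
    · rw [hF_Y i z hz, hF_Y i w hw]; exact hYY z hz w hw
    · rw [hF_Y i z hz, hF_X i w (hXcompl w hw)]
      exact hYX z hz w (hXcompl w hw)
    · rw [hF_X i z (hXcompl z hz), hF_Y i w hw, hρsymm, dist_comm, abs_sub_comm,
        abs_sub_comm (dist w z)]
      exact hYX w hw z (hXcompl z hz)
    · rw [hF_X i z (hXcompl z hz), hF_X i w (hXcompl w hw)]
      exact hXX z (hXcompl z hz) w (hXcompl w hw)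
  · intro p
    obtain ⟨y, hy, hdy⟩ := hf2 i p
    refine ⟨y, ?_⟩
    rw [hF_Y i y hy, hρ, hB]
    have hm := min_le_left (dist p (f i y))
      (Metric.infDist p A + Metric.infDist (f i y) A)
    linarith
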